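/- Let d ≥ 1, let P and Q be orthogonal d×d real matrices, let σ, σ̃ ∈ ℝ^d have nonnegative entries, and let p ≥ 0 be a real number. Then Σ_{j=1}^d (σ_j^{p+1} + σ̃_j^{p+1}) − Σ_{i,j=1}^d (σ_j^{p} σ̃_i + σ_j σ̃_i^{p})·P_{ij}·Q_{ij} = (1/2) Σ_{i,j=1}^d [ (σ_j^{p} − σ̃_i^{p})(σ_j − σ̃_i)·(P_{ij}² + Q_{ij}²) + (σ_j^{p} σ̃_i + σ_j σ̃_i^{p})·(P_{ij} − Q_{ij})² ]. -/
import Mathlib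


open Matrix BigOperators

/-- Algebraic rearrangement identity behind the monotonicity computation,
using that the rows and columns of orthogonal matrices are unit vectors. -/
theorem orthogonal_sum_identity
    (d : ℕ) (hd : 1 ≤ d)
    (P Q : Matrix (Fin d) (Fin d) ℝ)
    (hP : Pᵀ * P = 1) (hQ : Qᵀ * Q = 1)
    (σ σ' : Fin d → ℝ) (hσ : ∀ j, 0 ≤ σ j) (hσ' : ∀ j, 0 ≤ σ' j)
    (p : ℝ) (hp : 0 ≤ p) :
    (∑ j, (σ j ^ (p+1) + σ' j ^ (p+1)))
      - ∑ i, ∑ j, (σ j ^ p * σ' i + σ j * σ' i ^ p) * P i j * Q i j =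
    (1/2) * ∑ i, ∑ j,
      ((σ j ^ p - σ' i ^ p) * (σ j - σ' i) * ((P i j) ^ 2 + (Q i j) ^ 2)
        + (σ j ^ p * σ' i + σ j * σ' i ^ p) * (P i j - Q i j) ^ 2) := by
  have hP' : P * Pᵀ = 1 := mul_eq_one_comm.mp hP
  have hQ' : Q * Qᵀ = 1 := mul_eq_one_comm.mp hQ
  have hPc : ∀ j, ∑ i, (P i j) ^ 2 = 1 := by
    intro j
    have := congrFun (congrFun hP j) j
    simpa [Matrix.mul_apply, Matrix.transpose_apply, sq, Matrix.one_apply] using this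
  have hQc : ∀ j, ∑ i, (Q i j) ^ 2 = 1 := by
    intro j
    have := congrFun (congrFun hQ j) j
    simpa [Matrix.mul_apply, Matrix.transpose_apply, sq, Matrix.one_apply] using this
  have hPr : ∀ i, ∑ j, (P i j) ^ 2 = 1 := by
    intro i
    have := congrFun (congrFun hP' i) i
    simpa [Matrix.mul_apply, Matrix.transpose_apply, sq, Matrix.one_apply] using this
  have hQr : ∀ i, ∑ j, (Q i j) ^ 2 = 1 := by
    intro i
    have := congrFun (congrFun hQ' i) i
    simpa [Matrix.mul_apply, Matrix.transpose_apply, sq, Matrix.one_apply] using this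
  have hpow : ∀ x : ℝ, 0 ≤ x → x ^ (p+1) = x ^ p * x := by
    intro x hx
    rcases eq_or_lt_of_le hx with h | h
    · rw [← h, Real.zero_rpow (by positivity : p + 1 ≠ 0), mul_zero]
    · rw [Real.rpow_add_one h.ne']
  have key : ∀ i j, (σ j ^ p - σ' i ^ p) * (σ j - σ' i) * ((P i j) ^ 2 + (Q i j) ^ 2)
        + (σ j ^ p * σ' i + σ j * σ' i ^ p) * (P i j - Q i j) ^ 2
      = σ j ^ (p+1) * ((P i j) ^ 2 + (Q i j) ^ 2)
        + σ' i ^ (p+1) * ((P i j) ^ 2 + (Q i j) ^ 2)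
        - 2 * ((σ j ^ p * σ' i + σ j * σ' i ^ p) * P i j * Q i j) := by
    intro i j
    rw [hpow _ (hσ j), hpow _ (hσ' i)]
    ring
  have h1 : ∑ i, ∑ j, σ j ^ (p+1) * ((P i j) ^ 2 + (Q i j) ^ 2)
      = 2 * ∑ j, σ j ^ (p+1) := by
    rw [Finset.sum_comm, Finset.mul_sum]
    refine Finset.sum_congr rfl fun j _ => ?_
    rw [← Finset.mul_sum, Finset.sum_add_distrib, hPc j, hQc j]
    ring
  have h2 : ∑ i, ∑ j, σ' i ^ (p+1) * ((P i j) ^ 2 + (Q i j) ^ 2)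
      = 2 * ∑ i, σ' i ^ (p+1) := by
    rw [Finset.mul_sum]
    refine Finset.sum_congr rfl fun i _ => ?_
    rw [← Finset.mul_sum, Finset.sum_add_distrib, hPr i, hQr i]
    ring
  have hsum : ∑ i, ∑ j,
      ((σ j ^ p - σ' i ^ p) * (σ j - σ' i) * ((P i j) ^ 2 + (Q i j) ^ 2)
        + (σ j ^ p * σ' i + σ j * σ' i ^ p) * (P i j - Q i j) ^ 2)
      = 2 * ∑ j, σ j ^ (p+1) + 2 * ∑ i, σ' i ^ (p+1)
        - 2 * ∑ i, ∑ j, (σ j ^ p * σ' i + σ j * σ' i ^ p) * P i j * Q i j := by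
    simp only [key]
    rw [← h1, ← h2]
    simp [Finset.sum_add_distrib, Finset.sum_sub_distrib, Finset.mul_sum]
  rw [hsum, Finset.sum_add_distrib]
  ring
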